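/- Let δ ∈ (0,1), let t > 0 be fixed, define A(θ) = θδ·∫_0^1 s^{−δ}/(1+θs) ds, and for p ∈ (0,1] set θ_p = (t/p)^{1/δ}. Then lim_{p→0⁺} 1/(1 + p·A(θ_p)) = sinc δ/(t + sinc δ), where sinc δ = sin(πδ)/(πδ). (Since the success probability of the typical user in a Poisson cellular network with base-station activity probability p is p_s(θ,p) = 1/(1 + p·A(θ)), this states that p_s(θ,p) ∼ sinc δ/(p θ^δ + sinc δ) as p → 0 and θ → ∞ with pθ^δ = t held constant.) -/

import Mathlib

open Real MeasureTheory Filter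

lemma beta_complex {δ : ℝ} (hδ : δ ∈ Set.Ioo (0:ℝ) 1) :
    Complex.betaIntegral (1 - δ) δ = (π / Real.sin (π * δ) : ℝ) := by
  have h1 : (0:ℝ) < 1 - δ := by linarith [hδ.2]
  have hB := Complex.Gamma_mul_Gamma_eq_betaIntegral (s := (1:ℂ) - δ) (t := (δ:ℂ))
    (by simpa using h1) (by simpa using hδ.1)
  have hrefl := Complex.Gamma_mul_Gamma_one_sub (δ:ℂ)
  rw [show (1:ℂ) - δ + δ = 1 by ring, Complex.Gamma_one, one_mul] at hB
  rw [← hB, mul_comm, hrefl]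
  push_cast [Complex.ofReal_sin]
  ring_nf

lemma beta_eqon {δ : ℝ} (hδ : δ ∈ Set.Ioo (0:ℝ) 1) : ∀ x ∈ Set.uIcc (0:ℝ) 1,
    (x:ℂ) ^ ((1:ℂ) - δ - 1) * ((1:ℂ) - x) ^ ((δ:ℂ) - 1)
      = ((x ^ (-δ) * (1 - x) ^ (δ - 1) : ℝ) : ℂ) := by
  intro x hx
  rw [Set.uIcc_of_le zero_le_one] at hx
  rw [Complex.ofReal_mul, Complex.ofReal_cpow hx.1, Complex.ofReal_cpow (by linarith [hx.2])]
  push_cast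
  ring_nf

lemma beta_real {δ : ℝ} (hδ : δ ∈ Set.Ioo (0:ℝ) 1) :
    ∫ x in Set.Ioo (0:ℝ) 1, x ^ (-δ) * (1 - x) ^ (δ - 1) = π / Real.sin (π * δ) := by
  have hc := beta_complex hδ
  rw [Complex.betaIntegral] at hc
  rw [intervalIntegral.integral_congr (beta_eqon hδ), intervalIntegral.integral_ofReal] at hc
  have := Complex.ofReal_injective hc
  rwa [intervalIntegral.integral_of_le zero_le_one, integral_Ioc_eq_integral_Ioo] at this

lemma beta_integrable {δ : ℝ} (hδ : δ ∈ Set.Ioo (0:ℝ) 1) :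
    IntegrableOn (fun x : ℝ => x ^ (-δ) * (1 - x) ^ (δ - 1)) (Set.Ioo (0:ℝ) 1) := by
  have h1 : (0:ℝ) < 1 - δ := by linarith [hδ.2]
  have hc := Complex.betaIntegral_convergent (u := (1:ℂ) - δ) (v := (δ:ℂ))
    (by simpa using h1) (by simpa using hδ.1)
  rw [intervalIntegrable_iff_integrableOn_Ioc_of_le zero_le_one] at hc
  have hc2 : IntegrableOn (fun x : ℝ => ((x ^ (-δ) * (1 - x) ^ (δ - 1) : ℝ) : ℂ))
      (Set.Ioc (0:ℝ) 1) := by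
    refine hc.congr_fun (fun x hx => ?_) measurableSet_Ioc
    exact beta_eqon hδ x (by rw [Set.uIcc_of_le zero_le_one]; exact Set.Ioc_subset_Icc_self hx)
  have h3 : IntegrableOn (fun x : ℝ => x ^ (-δ) * (1 - x) ^ (δ - 1)) (Set.Ioc (0:ℝ) 1) := by
    exact (by simpa using hc2.re : Integrable (fun x : ℝ => x ^ (-δ) * (1 - x) ^ (δ - 1))
      (volume.restrict (Set.Ioc (0:ℝ) 1)))
  exact h3.mono_set Set.Ioo_subset_Ioc_self

lemma subst_image : (fun u : ℝ => u / (1 + u)) '' Set.Ioi 0 = Set.Ioo 0 1 := by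
  ext x
  constructor
  · rintro ⟨u, hu, rfl⟩
    have ha : (0:ℝ) < 1 + u := by linarith [Set.mem_Ioi.mp hu]
    exact ⟨div_pos (Set.mem_Ioi.mp hu) ha, (div_lt_one ha).mpr (by linarith)⟩
  · rintro ⟨hx0, hx1⟩
    refine ⟨x / (1 - x), Set.mem_Ioi.mpr (div_pos hx0 (by linarith)), ?_⟩
    have h1 : (1:ℝ) - x ≠ 0 := by linarith
    field_simp
    ring

lemma subst_inj : Set.InjOn (fun u : ℝ => u / (1 + u)) (Set.Ioi 0) := by
  intro a ha b hb hab
  simp only at hab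
  have ha' : (1:ℝ) + a ≠ 0 := by have := Set.mem_Ioi.mp ha; linarith
  have hb' : (1:ℝ) + b ≠ 0 := by have := Set.mem_Ioi.mp hb; linarith
  field_simp at hab
  nlinarith [hab]

lemma subst_deriv : ∀ u ∈ Set.Ioi (0:ℝ),
    HasDerivWithinAt (fun u : ℝ => u / (1 + u)) (((1 + u) ^ 2)⁻¹) (Set.Ioi 0) u := by
  intro u hu
  have ha : (1:ℝ) + u ≠ 0 := by have := Set.mem_Ioi.mp hu; linarith
  have h := (hasDerivAt_id u).div ((hasDerivAt_const u (1:ℝ)).add (hasDerivAt_id u)) ha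
  have h2 : (1 * (1 + u) - u * (0 + 1)) / (1 + u) ^ 2 = ((1 + u) ^ 2)⁻¹ := by
    field_simp
    ring
  exact (h2 ▸ h.hasDerivWithinAt : HasDerivWithinAt _ _ _ u)

lemma subst_pointwise {δ : ℝ} (hδ : δ ∈ Set.Ioo (0:ℝ) 1) {u : ℝ} (hu : 0 < u) :
    |((1 + u) ^ 2)⁻¹| • ((u / (1 + u)) ^ (-δ) * (1 - u / (1 + u)) ^ (δ - 1))
      = u ^ (-δ) / (1 + u) := by
  have ha : (0:ℝ) < 1 + u := by linarith
  have h1 : (1:ℝ) - u / (1 + u) = (1 + u)⁻¹ := by field_simp; ring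
  have e1 : (u / (1 + u)) ^ (-δ) = u ^ (-δ) * (1 + u) ^ δ := by
    rw [Real.div_rpow hu.le ha.le, Real.rpow_neg ha.le δ, div_inv_eq_mul]
  have e2 : ((1 + u)⁻¹ : ℝ) ^ (δ - 1) = (1 + u) ^ (1 - δ) := by
    rw [Real.inv_rpow ha.le, ← Real.rpow_neg ha.le, neg_sub]
  rw [h1, e1, e2, abs_of_pos (by positivity), smul_eq_mul]
  rw [mul_assoc, ← Real.rpow_add ha, show δ + (1 - δ) = 1 by ring, Real.rpow_one]
  field_simp

lemma subst_eq {δ : ℝ} (hδ : δ ∈ Set.Ioo (0:ℝ) 1) :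
    ∫ u in Set.Ioi (0:ℝ), u ^ (-δ) / (1 + u)
      = ∫ x in Set.Ioo (0:ℝ) 1, x ^ (-δ) * (1 - x) ^ (δ - 1) := by
  rw [← subst_image,
    integral_image_eq_integral_abs_deriv_smul measurableSet_Ioi subst_deriv subst_inj]
  exact setIntegral_congr_fun measurableSet_Ioi fun u hu => (subst_pointwise hδ hu).symm

lemma subst_integrable {δ : ℝ} (hδ : δ ∈ Set.Ioo (0:ℝ) 1) :
    IntegrableOn (fun u : ℝ => u ^ (-δ) / (1 + u)) (Set.Ioi (0:ℝ)) := by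
  have h := (integrableOn_image_iff_integrableOn_abs_deriv_smul measurableSet_Ioi subst_deriv
    subst_inj (fun x : ℝ => x ^ (-δ) * (1 - x) ^ (δ - 1))).mp
    (by rw [subst_image]; exact beta_integrable hδ)
  refine h.congr_fun (fun u hu => subst_pointwise hδ hu) measurableSet_Ioi

/-- For `δ ∈ (0,1)` and fixed `t > 0`, with `A(θ) = θδ ∫_0^1 s^{-δ}/(1+θs) ds` and
`θ_p = (t/p)^{1/δ}`, the success probability `p_s(θ_p,p) = 1/(1 + p A(θ_p))` satisfies
`lim_{p→0⁺} 1/(1 + p A(θ_p)) = sinc δ/(t + sinc δ)` where `sinc δ = sin(πδ)/(πδ)`. -/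
theorem cellular_success_probability_limit (δ t : ℝ) (hδ : δ ∈ Set.Ioo (0:ℝ) 1)
    (ht : 0 < t) (A : ℝ → ℝ)
    (hA : ∀ θ : ℝ, A θ = θ * δ * ∫ s in Set.Ioo (0:ℝ) 1, s ^ (-δ) / (1 + θ * s)) :
    Tendsto (fun p : ℝ => 1 / (1 + p * A ((t / p) ^ (1 / δ))))
      (nhdsWithin 0 (Set.Ioi 0))
      (nhds (Real.sin (π * δ) / (π * δ) / (t + Real.sin (π * δ) / (π * δ)))) := by
  obtain ⟨hδ0, hδ1⟩ := hδ
  have hπδ : 0 < π * δ := by positivity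
  have hS : 0 < Real.sin (π * δ) :=
    Real.sin_pos_of_pos_of_lt_pi hπδ (by nlinarith [Real.pi_pos])
  set L : ℝ := ∫ u in Set.Ioi (0:ℝ), u ^ (-δ) / (1 + u) with hLdef
  have hL : L = π / Real.sin (π * δ) := by
    rw [hLdef, subst_eq ⟨hδ0, hδ1⟩, beta_real ⟨hδ0, hδ1⟩]
  have key : ∀ p ∈ Set.Ioi (0:ℝ),
      p * A ((t / p) ^ (1 / δ))
        = t * δ * ∫ u in (0:ℝ)..((t / p) ^ (1 / δ)), u ^ (-δ) / (1 + u) := by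
    intro p hp
    have hp : 0 < p := hp
    set θ := (t / p) ^ (1 / δ) with hθdef
    have hθpos : 0 < θ := Real.rpow_pos_of_pos (div_pos ht hp) _
    have hθδ : θ ^ δ = t / p := by
      rw [hθdef, ← Real.rpow_mul (div_pos ht hp).le, one_div,
        inv_mul_cancel₀ hδ0.ne', Real.rpow_one]
    rw [hA]
    have h1 : (∫ s in Set.Ioo (0:ℝ) 1, s ^ (-δ) / (1 + θ * s))
        = ∫ s in (0:ℝ)..1, s ^ (-δ) / (1 + θ * s) := by
      rw [intervalIntegral.integral_of_le zero_le_one, integral_Ioc_eq_integral_Ioo]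
    have h2 : (∫ s in (0:ℝ)..1, s ^ (-δ) / (1 + θ * s))
        = ∫ s in (0:ℝ)..1, θ ^ δ * ((θ * s) ^ (-δ) / (1 + θ * s)) := by
      refine intervalIntegral.integral_congr fun s hs => ?_
      rw [Set.uIcc_of_le zero_le_one] at hs
      rcases eq_or_lt_of_le hs.1 with h | h
      · rw [← h, mul_zero, Real.zero_rpow (neg_ne_zero.mpr hδ0.ne')]
        simp [Real.zero_rpow (neg_ne_zero.mpr hδ0.ne')]
      · rw [Real.mul_rpow hθpos.le h.le, mul_div_assoc, ← mul_assoc,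
          ← Real.rpow_add hθpos, add_neg_cancel, Real.rpow_zero, one_mul]
    have h3 : (∫ s in (0:ℝ)..1, θ ^ δ * ((θ * s) ^ (-δ) / (1 + θ * s)))
        = θ ^ δ * ∫ s in (0:ℝ)..1, (θ * s) ^ (-δ) / (1 + θ * s) :=
      intervalIntegral.integral_const_mul _ _
    have h4 : (∫ s in (0:ℝ)..1, (θ * s) ^ (-δ) / (1 + θ * s))
        = θ⁻¹ • ∫ u in (θ * 0)..(θ * 1), u ^ (-δ) / (1 + u) :=
      intervalIntegral.integral_comp_mul_left (fun u => u ^ (-δ) / (1 + u)) hθpos.ne'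
    rw [h1, h2, h3, h4, mul_zero, mul_one, smul_eq_mul]
    rw [hθδ]
    field_simp
  have hθtop : Tendsto (fun p : ℝ => (t / p) ^ (1 / δ)) (nhdsWithin 0 (Set.Ioi 0)) atTop := by
    have h1 : Tendsto (fun p : ℝ => t / p) (nhdsWithin 0 (Set.Ioi 0)) atTop := by
      simp only [div_eq_mul_inv]
      exact Tendsto.const_mul_atTop ht tendsto_inv_nhdsGT_zero
    exact (tendsto_rpow_atTop (by positivity : (0:ℝ) < 1 / δ)).comp h1
  have hI : Tendsto (fun p : ℝ => ∫ u in (0:ℝ)..((t / p) ^ (1 / δ)), u ^ (-δ) / (1 + u))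
      (nhdsWithin 0 (Set.Ioi 0)) (nhds L) :=
    intervalIntegral_tendsto_integral_Ioi 0 (subst_integrable ⟨hδ0, hδ1⟩) hθtop
  have hPA : Tendsto (fun p : ℝ => p * A ((t / p) ^ (1 / δ)))
      (nhdsWithin 0 (Set.Ioi 0)) (nhds (t * δ * L)) :=
    Tendsto.congr' (Filter.eventuallyEq_of_mem self_mem_nhdsWithin key).symm
      (tendsto_const_nhds.mul hI)
  have hne : (1 : ℝ) + t * δ * L ≠ 0 := by
    rw [hL]; positivity
  have hval : Real.sin (π * δ) / (π * δ) / (t + Real.sin (π * δ) / (π * δ))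
      = 1 / (1 + t * δ * L) := by
    rw [hL]
    have h1 : t + Real.sin (π * δ) / (π * δ) ≠ 0 := by positivity
    have h2 : (1:ℝ) + t * δ * (π / Real.sin (π * δ)) ≠ 0 := by positivity
    rw [div_eq_div_iff h1 h2]
    field_simp
    ring
  rw [hval]
  exact tendsto_const_nhds.div (tendsto_const_nhds.add hPA) hne
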